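/- If y(x) = Σ_{k≥0} a_k x^{αk} is a formal power-series solution of the conformable Gegenbauer equation (1-x^{2α}) D^α D^α y - α(2λ+1) x^α D^α y + α² β y = 0, then the coefficients satisfy the recurrence a_{k+2} = (k(k+2λ) - β)/((k+1)(k+2)) · a_k for all k ≥ 0. -/

import Mathlib

open Real Filter Finset

/-- Conformable derivative of order `a` at `x`: `D^a f (x) = x^(1-a) * f'(x)`. -/
noncomputable def confDeriv (a : ℝ) (f : ℝ → ℝ) (x : ℝ) : ℝ := x ^ (1 - a) * deriv f x

/-- Gegenbauer polynomial `C_n^{(l)}(z)` as an explicit finite sum. -/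
noncomputable def gegenbauer (n : ℕ) (l : ℝ) (z : ℝ) : ℝ :=
  ∑ k ∈ Finset.range (n / 2 + 1),
    (-1 : ℝ) ^ k * Real.Gamma ((n - k : ℕ) + l) /
      (Real.Gamma l * (k.factorial : ℝ) * ((n - 2 * k).factorial : ℝ)) * (2 * z) ^ (n - 2 * k)

/-- Coefficient sequence of the termwise conformable derivative of `Σ a_k x^(αk)`:
`D^α(x^(αk)) = α k x^(α(k-1))`. -/
noncomputable def confDcoeff (α : ℝ) (a : ℕ → ℝ) : ℕ → ℝ := fun k => α * (k + 1) * a (k + 1)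

/-- recurrence for formal power-series solutions of the conformable
Gegenbauer equation, viewed as formal power series in `X = x^α`. -/
theorem stmt_3 (α : ℝ) (hα : α ∈ Set.Ioc (0 : ℝ) 1) (l β : ℝ) (a : ℕ → ℝ)
    (heq : (1 - PowerSeries.X ^ 2) * PowerSeries.mk (confDcoeff α (confDcoeff α a))
        - PowerSeries.C (R := ℝ) (α * (2 * l + 1)) * PowerSeries.X * PowerSeries.mk (confDcoeff α a)
        + PowerSeries.C (R := ℝ) (α ^ 2 * β) * PowerSeries.mk a = 0) :
    ∀ k : ℕ, a (k + 2) = ((k : ℝ) * ((k : ℝ) + 2 * l) - β) / (((k : ℝ) + 1) * ((k : ℝ) + 2)) * a k := by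
  have hα0 : α ≠ 0 := hα.1.ne'
  rw [sub_mul, one_mul, mul_assoc] at heq
  intro k
  have h := congrArg (PowerSeries.coeff (R := ℝ) k) heq
  rw [map_zero, map_add, map_sub, map_sub, PowerSeries.coeff_C_mul, PowerSeries.coeff_C_mul,
    PowerSeries.coeff_X_pow_mul',
    show (PowerSeries.X : PowerSeries ℝ) = PowerSeries.X ^ 1 by rw [pow_one],
    PowerSeries.coeff_X_pow_mul'] at h
  have hD : (((k:ℝ)) + 1) * ((k:ℝ) + 2) ≠ 0 := by positivity
  have key : (((k:ℝ)) + 1) * ((k:ℝ) + 2) * a (k + 2)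
      = ((k : ℝ) * ((k : ℝ) + 2 * l) - β) * a k := by
    apply mul_left_cancel₀ (pow_ne_zero 2 hα0)
    match k with
    | 0 =>
      norm_num [confDcoeff] at h
      push_cast
      linear_combination h
    | 1 =>
      norm_num [confDcoeff] at h
      push_cast
      linear_combination h
    | (m + 2) =>
      rw [if_pos (by omega), if_pos (by omega)] at h
      simp only [confDcoeff, PowerSeries.coeff_mk, Nat.add_sub_cancel,
        show m + 2 - 1 = m + 1 from rfl] at h
      push_cast at h ⊢
      linear_combination h
  rw [div_mul_eq_mul_div, eq_div_iff hD]
  linear_combination key
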